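/- arXiv:1709.07661 — 5 statements merged into one kernel-verified Lean document; each statement's English description precedes it below -/
import Mathlib

section
/- Suppose in addition that there are σ > 1 such that V(y) ≥ 1 − y^{1−σ} for all y ≥ 1. Then for every i = 1,…,N−1 and every t ≥ 0 one has 1 ≤ y_i(t) ≤ (y_i(0)^σ + σt/ℓ)^{1/σ}. -/
/-- **Lemma 2.1, estimate (2.2).**
Context: `N ≥ 2`, `ℓ = 1/(N+1)`; `V : [1,∞) → [0,1]` is `C¹`, nondecreasing, `V 1 = 0`;
`y_1, …, y_{N-1} : [0,∞) → [1,∞)` solve the Follow-the-Leader system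
`ẏ_i = (V_{i+1} - V_i)/ℓ` with `V_i = V (y_i)` and `V_N = 1`, and `y_i 0 ≥ 1`.
Statement: if moreover `V y ≥ 1 - y^(1-σ)` on `[1,∞)` for some `σ > 1`, then
`1 ≤ y_i t ≤ (y_i 0 ^ σ + σ t / ℓ)^(1/σ)` for all `i = 1, …, N-1` and `t ≥ 0`. -/
theorem ftl_gap_upper_bound
    (N : ℕ) (hN : 2 ≤ N)
    (ℓ : ℝ) (hℓ : ℓ = 1 / (N + 1))
    (V : ℝ → ℝ)
    (hV_C1 : ContDiffOn ℝ 1 V (Set.Ici 1))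
    (hV_mono : MonotoneOn V (Set.Ici 1))
    (hV_range : ∀ x ∈ Set.Ici (1:ℝ), V x ∈ Set.Icc (0:ℝ) 1)
    (hV1 : V 1 = 0)
    (y : ℕ → ℝ → ℝ)
    (hy_ge1 : ∀ i ∈ Finset.Icc 1 (N-1), ∀ t : ℝ, 0 ≤ t → 1 ≤ y i t)
    (hODE : ∀ i ∈ Finset.Icc 1 (N-1), ∀ t : ℝ, 0 ≤ t →
      HasDerivAt (y i) (((if i + 1 = N then (1:ℝ) else V (y (i+1) t)) - V (y i t)) / ℓ) t)
    (σ : ℝ) (hσ : 1 < σ)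
    (hVlow : ∀ x : ℝ, 1 ≤ x → 1 - x ^ (1 - σ) ≤ V x) :
    ∀ i ∈ Finset.Icc 1 (N-1), ∀ t : ℝ, 0 ≤ t →
      1 ≤ y i t ∧ y i t ≤ (y i 0 ^ σ + σ * t / ℓ) ^ (1/σ) := by
  have hℓpos : 0 < ℓ := by
    rw [hℓ]; positivity
  have hσ0 : (0:ℝ) < σ := lt_trans one_pos hσ
  intro i hi t ht
  have hy1 : ∀ s : ℝ, 0 ≤ s → 1 ≤ y i s := hy_ge1 i hi
  refine ⟨hy1 t ht, ?_⟩
  -- define h s = y i s ^ σ - σ * s / ℓ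
  set h : ℝ → ℝ := fun s => y i s ^ σ - σ * s / ℓ with hh
  -- derivative of h at each s ≥ 0
  have hderiv : ∀ s ∈ Set.Ici (0:ℝ),
      HasDerivAt h ((((if i + 1 = N then (1:ℝ) else V (y (i+1) s)) - V (y i s)) / ℓ)
        * σ * y i s ^ (σ - 1) - σ / ℓ) s := by
    intro s hs
    have h1 : HasDerivAt (fun u => y i u ^ σ)
        ((((if i + 1 = N then (1:ℝ) else V (y (i+1) s)) - V (y i s)) / ℓ)
          * σ * y i s ^ (σ - 1)) s := by
      exact (hODE i hi s hs).rpow_const (Or.inl (by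
        have := hy1 s hs; linarith))
    have h2 : HasDerivAt (fun u : ℝ => σ * u / ℓ) (σ / ℓ) s := by
      have := ((hasDerivAt_id s).const_mul σ).div_const ℓ
      simpa using this
    exact h1.sub h2
  have hderiv_nonpos : ∀ s ∈ Set.Ici (0:ℝ),
      (((if i + 1 = N then (1:ℝ) else V (y (i+1) s)) - V (y i s)) / ℓ)
        * σ * y i s ^ (σ - 1) - σ / ℓ ≤ 0 := by
    intro s hs
    have hys : 1 ≤ y i s := hy1 s hs
    have hyspos : (0:ℝ) < y i s := lt_of_lt_of_le one_pos hys
    -- numerator bound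
    have hnum : (if i + 1 = N then (1:ℝ) else V (y (i+1) s)) - V (y i s)
        ≤ y i s ^ (1 - σ) := by
      have hup : (if i + 1 = N then (1:ℝ) else V (y (i+1) s)) ≤ 1 := by
        split_ifs with hne
        · exact le_rfl
        · have hi' : i + 1 ∈ Finset.Icc 1 (N-1) := by
            simp only [Finset.mem_Icc] at hi ⊢
            omega
          have := hV_range (y (i+1) s) (hy_ge1 (i+1) hi' s hs)
          exact this.2
      have hlow : 1 - y i s ^ (1 - σ) ≤ V (y i s) := hVlow (y i s) hys
      linarith
    have hpow_nonneg : (0:ℝ) ≤ y i s ^ (σ - 1) := Real.rpow_nonneg (le_of_lt hyspos) _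
    have hkey : (((if i + 1 = N then (1:ℝ) else V (y (i+1) s)) - V (y i s)) / ℓ)
        * σ * y i s ^ (σ - 1) ≤ σ / ℓ := by
      have h1 : (((if i + 1 = N then (1:ℝ) else V (y (i+1) s)) - V (y i s)) / ℓ)
          * σ * y i s ^ (σ - 1)
          ≤ (y i s ^ (1 - σ) / ℓ) * σ * y i s ^ (σ - 1) := by
        apply mul_le_mul_of_nonneg_right _ hpow_nonneg
        apply mul_le_mul_of_nonneg_right _ (le_of_lt hσ0)
        exact div_le_div_of_nonneg_right hnum hℓpos.le |>.trans_eq rfl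
      have hone : y i s ^ (1 - σ) * y i s ^ (σ - 1) = 1 := by
        rw [← Real.rpow_add hyspos]
        norm_num
      have h2 : (y i s ^ (1 - σ) / ℓ) * σ * y i s ^ (σ - 1) = σ / ℓ := by
        calc (y i s ^ (1 - σ) / ℓ) * σ * y i s ^ (σ - 1)
            = (y i s ^ (1 - σ) * y i s ^ (σ - 1)) * σ / ℓ := by ring
          _ = σ / ℓ := by rw [hone]; ring
      linarith [h1, h2.le, h2.ge]
    linarith
  -- h is antitone on Ici 0
  have hanti : AntitoneOn h (Set.Ici (0:ℝ)) := by
    apply antitoneOn_of_deriv_nonpos (convex_Ici 0)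
    · intro s hs
      exact (hderiv s hs).continuousAt.continuousWithinAt
    · intro s hs
      rw [interior_Ici] at hs
      exact (hderiv s (Set.mem_Ici.mpr (le_of_lt (Set.mem_Ioi.mp hs)))).differentiableAt.differentiableWithinAt
    · intro s hs
      rw [interior_Ici] at hs
      rw [(hderiv s (Set.mem_Ici.mpr (le_of_lt (Set.mem_Ioi.mp hs)))).deriv]
      exact hderiv_nonpos s (Set.mem_Ici.mpr (le_of_lt (Set.mem_Ioi.mp hs)))
  have hht : h t ≤ h 0 := hanti (le_refl (0:ℝ)) ht ht
  have hsig : y i t ^ σ ≤ y i 0 ^ σ + σ * t / ℓ := by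
    simp only [hh] at hht
    have : σ * 0 / ℓ = 0 := by ring
    rw [this] at hht
    linarith
  -- conclude via rpow
  have hy0 : (0:ℝ) < y i t := lt_of_lt_of_le one_pos (hy1 t ht)
  have hfinal : (y i t ^ σ) ^ (1/σ) = y i t := by
    rw [← Real.rpow_mul hy0.le, mul_one_div_cancel (ne_of_gt hσ0), Real.rpow_one]
  calc y i t = (y i t ^ σ) ^ (1/σ) := hfinal.symm
    _ ≤ (y i 0 ^ σ + σ * t / ℓ) ^ (1/σ) :=
        Real.rpow_le_rpow (Real.rpow_nonneg hy0.le _) hsig (by positivity)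
end

section
/- For all 0 ≤ s ≤ t one has Σ_{i=1}^{N−1} |V_{i+1}(t) − V_i(t)| ≤ Σ_{i=1}^{N−1} |V_{i+1}(s) − V_i(s)|; in particular the discrete total variation of the velocities V_i is nonincreasing in time. -/
/-- **Lemma 2.2, estimate (2.8) for the velocities.**
Context: `N ≥ 2`, `ℓ = 1/(N+1)`; `V : [1,∞) → [0,1]` is `C¹`, nondecreasing, `V 1 = 0`;
`y_1, …, y_{N-1} : [0,∞) → [1,∞)` solve `ẏ_i = (V_{i+1} - V_i)/ℓ`, `V_i = V (y_i)`,
`V_N = 1`.  Statement: for `0 ≤ s ≤ t`,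
`∑_{i=1}^{N-1} |V_{i+1}(t) - V_i(t)| ≤ ∑_{i=1}^{N-1} |V_{i+1}(s) - V_i(s)|`:
the discrete total variation of the velocities is nonincreasing in time. -/
theorem ftl_velocity_tv_nonincreasing
    (N : ℕ) (hN : 2 ≤ N)
    (ℓ : ℝ) (hℓ : ℓ = 1 / (N + 1))
    (V : ℝ → ℝ)
    (hV_C1 : ContDiffOn ℝ 1 V (Set.Ici 1))
    (hV_mono : MonotoneOn V (Set.Ici 1))
    (hV_range : ∀ x ∈ Set.Ici (1:ℝ), V x ∈ Set.Icc (0:ℝ) 1)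
    (hV1 : V 1 = 0)
    (y : ℕ → ℝ → ℝ)
    (hy_ge1 : ∀ i ∈ Finset.Icc 1 (N-1), ∀ t : ℝ, 0 ≤ t → 1 ≤ y i t)
    (hODE : ∀ i ∈ Finset.Icc 1 (N-1), ∀ t : ℝ, 0 ≤ t →
      HasDerivAt (y i) (((if i + 1 = N then (1:ℝ) else V (y (i+1) t)) - V (y i t)) / ℓ) t) :
    ∀ s t : ℝ, 0 ≤ s → s ≤ t →
      ∑ i ∈ Finset.Icc 1 (N-1),
          |(if i + 1 = N then (1:ℝ) else V (y (i+1) t)) - V (y i t)|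
        ≤ ∑ i ∈ Finset.Icc 1 (N-1),
            |(if i + 1 = N then (1:ℝ) else V (y (i+1) s)) - V (y i s)| := by
  intro s t hs hst
  classical
  have hℓpos : 0 < ℓ := by rw [hℓ]; positivity
  set I : Finset ℕ := Finset.Icc 1 (N - 1) with hIdef
  set d : ℕ → ℝ → ℝ :=
    fun i τ => (if i + 1 = N then (1:ℝ) else V (y (i+1) τ)) - V (y i τ) with hddef
  set F : ℝ → ℝ := fun τ => ∑ i ∈ I, |d i τ| with hFdef
  show F t ≤ F s
  -- basic facts
  have hy_cont : ∀ i ∈ I, ContinuousOn (y i) (Set.Ici 0) := fun i hi τ hτ =>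
    (hODE i hi τ hτ).continuousAt.continuousWithinAt
  have hVdiff : DifferentiableOn ℝ V (Set.Ici 1) := hV_C1.differentiableOn one_ne_zero
  have hVcont : ContinuousOn V (Set.Ici 1) := hV_C1.continuousOn
  set a : ℕ → ℝ → ℝ := fun i τ => derivWithin V (Set.Ici 1) (y i τ) with hadef
  have hVderiv : ∀ x ∈ Set.Ici (1:ℝ),
      HasDerivWithinAt V (derivWithin V (Set.Ici 1) x) (Set.Ici 1) x :=
    fun x hx => (hVdiff x hx).hasDerivWithinAt
  have hVderiv_nonneg : ∀ x ∈ Set.Ici (1:ℝ), 0 ≤ derivWithin V (Set.Ici 1) x := by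
    intro x hx
    have h1 : Filter.Tendsto (slope V x) (nhdsWithin x (Set.Ici 1 \ {x}))
        (nhds (derivWithin V (Set.Ici 1) x)) :=
      hasDerivWithinAt_iff_tendsto_slope.1 (hVderiv x hx)
    have hle : nhdsWithin x (Set.Ioi x) ≤ nhdsWithin x (Set.Ici 1 \ {x}) :=
      nhdsWithin_mono x (fun z hz => ⟨(show (1:ℝ) ≤ z from le_trans hx (le_of_lt hz)), (by simpa using (ne_of_lt hz).symm)⟩)
    haveI : (nhdsWithin x (Set.Ici 1 \ {x})).NeBot := Filter.neBot_of_le hle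
    refine ge_of_tendsto h1 ?_
    filter_upwards [self_mem_nhdsWithin] with z hz
    rcases hz with ⟨hz1, hzx⟩
    have hzx' : z ≠ x := hzx
    rw [slope_def_field]
    rcases lt_or_gt_of_ne hzx' with h | h
    · apply div_nonneg_iff.2
      refine Or.inr ⟨?_, by linarith⟩
      have := hV_mono hz1 hx (le_of_lt h)
      linarith
    · apply div_nonneg
      · have := hV_mono hx hz1 (le_of_lt h)
        linarith
      · linarith
  -- derivative of V ∘ y i
  set D : ℕ → ℝ → ℝ := fun i τ => a i τ * (d i τ / ℓ) with hDdef
  have hUderiv : ∀ i ∈ I, ∀ τ : ℝ, 0 ≤ τ →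
      HasDerivWithinAt (fun z => V (y i z)) (D i τ) (Set.Ici 0) τ := by
    intro i hi τ hτ
    have h1 := hVderiv (y i τ) (hy_ge1 i hi τ hτ)
    have h2 := (hODE i hi τ hτ).hasDerivWithinAt (s := Set.Ici 0)
    exact h1.comp τ h2 (fun z hz => hy_ge1 i hi z hz)
  set E : ℕ → ℝ → ℝ := fun i τ => (if i + 1 = N then 0 else D (i+1) τ) - D i τ with hEdef
  have hd_deriv : ∀ i ∈ I, ∀ τ : ℝ, 0 ≤ τ →
      HasDerivWithinAt (d i) (E i τ) (Set.Ici 0) τ := by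
    intro i hi τ hτ
    have h2 := hUderiv i hi τ hτ
    by_cases hiN : i + 1 = N
    · have h1 : HasDerivWithinAt (fun _ : ℝ => (1:ℝ)) 0 (Set.Ici 0) τ :=
        hasDerivWithinAt_const τ _ 1
      have := h1.sub h2
      simp only [hddef, hEdef, hiN, if_pos] at *
      simpa [Pi.sub_def] using this
    · have hi1 : i + 1 ∈ I := by
        simp only [hIdef, Finset.mem_Icc] at hi ⊢; omega
      have h1 := hUderiv (i+1) hi1 τ hτ
      have := h1.sub h2
      simp only [hddef, hEdef, hiN, if_neg, if_false] at *
      simpa [Pi.sub_def] using this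
  -- sign vectors
  set σ : Finset ℕ → ℕ → ℝ := fun A i => if i ∈ A then 1 else -1 with hσdef
  set g : Finset ℕ → ℝ → ℝ := fun A τ => ∑ i ∈ I, σ A i * d i τ with hgdef
  set g' : Finset ℕ → ℝ → ℝ := fun A τ => ∑ i ∈ I, σ A i * E i τ with hg'def
  have hσ_abs : ∀ (A : Finset ℕ) (i : ℕ) (x : ℝ), σ A i * x ≤ |x| := by
    intro A i x
    by_cases h : i ∈ A <;>
      simp [hσdef, h, le_abs_self, neg_le_abs]
  have hg_deriv : ∀ (A : Finset ℕ), ∀ τ : ℝ, 0 ≤ τ →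
      HasDerivWithinAt (g A) (g' A τ) (Set.Ici 0) τ := by
    intro A τ hτ
    exact HasDerivWithinAt.fun_sum (fun i hi => (hd_deriv i hi τ hτ).const_mul _)
  -- key inequality: at active points, g' ≤ 0
  have hkey : ∀ (A : Finset ℕ), ∀ τ : ℝ, 0 ≤ τ →
      (∀ i ∈ I, σ A i * d i τ = |d i τ|) → g' A τ ≤ 0 := by
    intro A τ hτ hact
    have haτ : ∀ i ∈ I, 0 ≤ a i τ := fun i hi =>
      hVderiv_nonneg _ (hy_ge1 i hi τ hτ)
    have hJI : Finset.Icc 1 (N-2) ⊆ I := by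
      intro i hi; simp only [hIdef, Finset.mem_Icc] at hi ⊢; omega
    have hKI : Finset.Icc 2 (N-1) ⊆ I := by
      intro i hi; simp only [hIdef, Finset.mem_Icc] at hi ⊢; omega
    -- first sum
    have hS1 : ∑ i ∈ I, σ A i * (if i + 1 = N then (0:ℝ) else D (i+1) τ)
        = ∑ i ∈ Finset.Icc 1 (N-2), σ A i * D (i+1) τ := by
      rw [← Finset.sum_subset hJI]
      · apply Finset.sum_congr rfl
        intro i hi
        have : ¬ (i + 1 = N) := by
          simp only [Finset.mem_Icc] at hi; omega
        rw [if_neg this]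
      · intro i hiI hiJ
        have : i + 1 = N := by
          simp only [hIdef, Finset.mem_Icc] at hiI hiJ; omega
        rw [if_pos this, mul_zero]
    have hS2 : ∑ i ∈ Finset.Icc 1 (N-2), σ A i * D (i+1) τ
        ≤ ∑ i ∈ Finset.Icc 1 (N-2), σ A (i+1) * D (i+1) τ := by
      apply Finset.sum_le_sum
      intro i hi
      have hi1 : i + 1 ∈ I := by
        simp only [hIdef, Finset.mem_Icc] at hi ⊢; omega
      have h1 : σ A i * d (i+1) τ ≤ σ A (i+1) * d (i+1) τ := by
        rw [hact (i+1) hi1]; exact hσ_abs A i _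
      have hc : 0 ≤ a (i+1) τ / ℓ := div_nonneg (haτ _ hi1) hℓpos.le
      calc σ A i * D (i+1) τ = (σ A i * d (i+1) τ) * (a (i+1) τ / ℓ) := by
            rw [hDdef]; ring
        _ ≤ (σ A (i+1) * d (i+1) τ) * (a (i+1) τ / ℓ) :=
            mul_le_mul_of_nonneg_right h1 hc
        _ = σ A (i+1) * D (i+1) τ := by rw [hDdef]; ring
    have hS3 : ∑ i ∈ Finset.Icc 1 (N-2), σ A (i+1) * D (i+1) τ
        = ∑ j ∈ Finset.Icc 2 (N-1), σ A j * D j τ := by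
      have hKmap : Finset.map (addRightEmbedding 1) (Finset.Icc 1 (N-2))
          = Finset.Icc 2 (N-1) := by
        rw [Finset.map_add_right_Icc]
        congr 1
        omega
      rw [← hKmap, Finset.sum_map]
      apply Finset.sum_congr rfl
      intro i _
      simp [addRightEmbedding]
    have hDnonneg : ∀ j ∈ I, 0 ≤ σ A j * D j τ := by
      intro j hj
      have : σ A j * D j τ = |d j τ| * (a j τ / ℓ) := by
        rw [hDdef]
        have := hact j hj
        calc σ A j * (a j τ * (d j τ / ℓ)) = (σ A j * d j τ) * (a j τ / ℓ) := by ring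
          _ = |d j τ| * (a j τ / ℓ) := by rw [this]
      rw [this]
      exact mul_nonneg (abs_nonneg _) (div_nonneg (haτ _ hj) hℓpos.le)
    have hS4 : ∑ j ∈ Finset.Icc 2 (N-1), σ A j * D j τ ≤ ∑ j ∈ I, σ A j * D j τ :=
      Finset.sum_le_sum_of_subset_of_nonneg hKI (fun j hj _ => hDnonneg j hj)
    have hsplit : g' A τ = (∑ i ∈ I, σ A i * (if i + 1 = N then (0:ℝ) else D (i+1) τ))
        - ∑ i ∈ I, σ A i * D i τ := by
      rw [hg'def, ← Finset.sum_sub_distrib]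
      apply Finset.sum_congr rfl
      intro i _
      rw [hEdef]
      ring
    rw [hsplit, hS1]
    linarith [hS2, hS3.le, hS4, hS3.ge]
  -- continuity
  have hU_cont : ∀ i ∈ I, ContinuousOn (fun z => V (y i z)) (Set.Ici 0) :=
    fun i hi => hVcont.comp (hy_cont i hi) (fun z hz => hy_ge1 i hi z hz)
  have hd_cont : ∀ i ∈ I, ContinuousOn (d i) (Set.Ici 0) := by
    intro i hi
    by_cases hiN : i + 1 = N
    · have := continuousOn_const (c := (1:ℝ)) (s := Set.Ici (0:ℝ)) |>.sub (hU_cont i hi)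
      simp only [hddef, hiN, if_pos]
      simpa [Pi.sub_def] using this
    · have hi1 : i + 1 ∈ I := by
        simp only [hIdef, Finset.mem_Icc] at hi ⊢; omega
      have := (hU_cont (i+1) hi1).sub (hU_cont i hi)
      simp only [hddef, hiN, if_neg, if_false]
      simpa [Pi.sub_def] using this
  have hF_cont : ContinuousOn F (Set.Ici 0) := by
    rw [hFdef]
    exact continuousOn_finset_sum I (fun i hi => (hd_cont i hi).abs)
  -- matching sign vector at every point
  have hmatch : ∀ τ : ℝ, ∃ A ∈ I.powerset, F τ = g A τ := by
    intro τ
    refine ⟨I.filter (fun i => 0 ≤ d i τ), Finset.mem_powerset.2 (Finset.filter_subset _ _), ?_⟩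
    rw [hFdef, hgdef]
    apply Finset.sum_congr rfl
    intro i hi
    by_cases h : 0 ≤ d i τ
    · simp [hσdef, Finset.mem_filter, hi, h, abs_of_nonneg h]
    · simp [hσdef, Finset.mem_filter, h, abs_of_neg (lt_of_not_ge h)]
  -- the Dini-type bound
  have hbound : ∀ x ∈ Set.Ico s t, ∀ r : ℝ, (0:ℝ) < r →
      ∃ᶠ z in nhdsWithin x (Set.Ioi x), slope F x z < r := by
    intro x hx r hr
    have hx0 : 0 ≤ x := le_trans hs hx.1
    obtain ⟨A, hA, hAfreq⟩ : ∃ A ∈ I.powerset, ∃ᶠ z in nhdsWithin x (Set.Ioi x), F z = g A z := by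
      by_contra hcon
      push_neg at hcon
      have hev : ∀ᶠ z in nhdsWithin x (Set.Ioi x), ∀ A ∈ I.powerset, ¬ (F z = g A z) :=
        (Filter.eventually_all_finset _).2 fun A hA => (hcon A hA)
      obtain ⟨z, hz⟩ := hev.exists
      obtain ⟨A, hA, hFz⟩ := hmatch z
      exact hz A hA hFz
    have hmono : nhdsWithin x (Set.Ioi x) ≤ nhdsWithin x (Set.Ici 0) :=
      nhdsWithin_mono x (fun z hz => (show (0:ℝ) ≤ z from le_trans hx0 (le_of_lt hz)))
    have hqF : Filter.Tendsto F (nhdsWithin x (Set.Ioi x)) (nhds (F x)) :=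
      (hF_cont x hx0).tendsto.mono_left hmono
    have hqg : Filter.Tendsto (g A) (nhdsWithin x (Set.Ioi x)) (nhds (g A x)) :=
      ((hg_deriv A x hx0).continuousWithinAt).tendsto.mono_left hmono
    have hFg : F x = g A x := tendsto_nhds_unique_of_frequently_eq hqF hqg hAfreq
    have hact : ∀ i ∈ I, σ A i * d i x = |d i x| := by
      have hle : ∀ i ∈ I, σ A i * d i x ≤ |d i x| := fun i _ => hσ_abs A i _
      have hsum : ∑ i ∈ I, σ A i * d i x = ∑ i ∈ I, |d i x| := by
        rw [hgdef] at hFg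
        rw [hFdef] at hFg
        exact hFg.symm
      exact fun i hi => (Finset.sum_eq_sum_iff_of_le hle).1 hsum i hi
    have hg'le : g' A x ≤ 0 := hkey A x hx0 hact
    have hslope : Filter.Tendsto (slope (g A) x) (nhdsWithin x (Set.Ioi x)) (nhds (g' A x)) := by
      have h1 := hasDerivWithinAt_iff_tendsto_slope.1 (hg_deriv A x hx0)
      exact h1.mono_left (nhdsWithin_mono x
        (fun z hz => ⟨(show (0:ℝ) ≤ z from le_trans hx0 (le_of_lt hz)), (by simpa using (ne_of_lt hz).symm)⟩))
    have hev2 : ∀ᶠ z in nhdsWithin x (Set.Ioi x), slope (g A) x z < r :=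
      hslope.eventually_lt_const (lt_of_le_of_lt hg'le hr)
    refine (hAfreq.and_eventually hev2).mono ?_
    rintro z ⟨hz1, hz2⟩
    have : slope F x z = slope (g A) x z := by
      rw [slope_def_field, slope_def_field, hz1, hFg]
    rw [this]
    exact hz2
  -- apply the fencing theorem with constant boundary
  have hIccsub : Set.Icc s t ⊆ Set.Ici 0 := fun z hz => le_trans hs hz.1
  have := image_le_of_liminf_slope_right_le_deriv_boundary
      (f := F) (a := s) (b := t) (hF_cont.mono hIccsub)
      (B := fun _ => F s) (B' := fun _ => 0) le_rfl continuousOn_const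
      (fun x _ => hasDerivWithinAt_const x _ (F s)) hbound
  exact this (Set.right_mem_Icc.2 hst)
end

section
/- For all 0 ≤ s ≤ t one has Σ_{i=1}^{N−1} |ρ_{i+1}(t) − ρ_i(t)| ≤ Σ_{i=1}^{N−1} |ρ_{i+1}(s) − ρ_i(s)|; in particular the discrete total variation of the densities ρ_i = 1/y_i is nonincreasing in time. -/
open Set Filter Topology

/-- **Lemma 2.2, estimate (2.9) for the densities.**
Context: `N ≥ 2`, `ℓ = 1/(N+1)`; `V : [1,∞) → [0,1]` is `C¹`, nondecreasing, `V 1 = 0`;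
`y_1, …, y_{N-1} : [0,∞) → [1,∞)` solve `ẏ_i = (V_{i+1} - V_i)/ℓ`, `V_i = V (y_i)`,
`V_N = 1`; `ρ_i = 1/y_i` for `1 ≤ i ≤ N-1` and `ρ_N = 0`.
Statement: for `0 ≤ s ≤ t`,
`∑_{i=1}^{N-1} |ρ_{i+1}(t) - ρ_i(t)| ≤ ∑_{i=1}^{N-1} |ρ_{i+1}(s) - ρ_i(s)|`:
the discrete total variation of the densities is nonincreasing in time. -/
theorem ftl_density_tv_nonincreasing
    (N : ℕ) (hN : 2 ≤ N)
    (ℓ : ℝ) (hℓ : ℓ = 1 / (N + 1))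
    (V : ℝ → ℝ)
    (hV_C1 : ContDiffOn ℝ 1 V (Set.Ici 1))
    (hV_mono : MonotoneOn V (Set.Ici 1))
    (hV_range : ∀ x ∈ Set.Ici (1:ℝ), V x ∈ Set.Icc (0:ℝ) 1)
    (hV1 : V 1 = 0)
    (y : ℕ → ℝ → ℝ)
    (hy_ge1 : ∀ i ∈ Finset.Icc 1 (N-1), ∀ t : ℝ, 0 ≤ t → 1 ≤ y i t)
    (hODE : ∀ i ∈ Finset.Icc 1 (N-1), ∀ t : ℝ, 0 ≤ t →
      HasDerivAt (y i) (((if i + 1 = N then (1:ℝ) else V (y (i+1) t)) - V (y i t)) / ℓ) t) :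
    ∀ s t : ℝ, 0 ≤ s → s ≤ t →
      ∑ i ∈ Finset.Icc 1 (N-1),
          |(if i + 1 = N then (0:ℝ) else 1 / y (i+1) t) - 1 / y i t|
        ≤ ∑ i ∈ Finset.Icc 1 (N-1),
            |(if i + 1 = N then (0:ℝ) else 1 / y (i+1) s) - 1 / y i s| := by
  intro s t hs hst
  have hℓpos : 0 < ℓ := by rw [hℓ]; positivity
  have hℓne : ℓ ≠ 0 := ne_of_gt hℓpos
  have hypos : ∀ i ∈ Finset.Icc 1 (N-1), ∀ x : ℝ, 0 ≤ x → 0 < y i x :=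
    fun i hi x hx => lt_of_lt_of_le zero_lt_one (hy_ge1 i hi x hx)
  have hyne : ∀ i ∈ Finset.Icc 1 (N-1), ∀ x : ℝ, 0 ≤ x → y i x ≠ 0 :=
    fun i hi x hx => ne_of_gt (hypos i hi x hx)
  set g : ℕ → ℝ → ℝ := fun i z =>
    (if i + 1 = N then (0:ℝ) else 1 / y (i+1) z) - 1 / y i z with hg_def
  set A : ℕ → ℝ → ℝ := fun i x =>
    (if i + 1 = N then (1:ℝ) else V (y (i+1) x)) - V (y i x) with hA_def
  set c : ℕ → ℝ → ℝ := fun i x =>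
    if i = N then 0 else (1 / y i x)^2 * A i x with hc_def
  set G : ℕ → ℝ → ℝ := fun i x => (c i x - c (i+1) x) / ℓ with hG_def
  set σ : ℕ → ℝ → ℝ := fun i x =>
    if g i x = 0 then (if 0 ≤ G i x then 1 else (-1:ℝ))
    else (if 0 ≤ g i x then 1 else -1) with hσ_def
  -- the ODE, stated with A
  have hODE' : ∀ i ∈ Finset.Icc 1 (N-1), ∀ x : ℝ, 0 ≤ x →
      HasDerivAt (y i) (A i x / ℓ) x := fun i hi x hx => hODE i hi x hx
  -- derivative of 1 / y i
  have hρd : ∀ i ∈ Finset.Icc 1 (N-1), ∀ x : ℝ, 0 ≤ x →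
      HasDerivAt (fun z => 1 / y i z) (-c i x / ℓ) x := by
    intro i hi x hx
    have hiN : i ≠ N := by have := Finset.mem_Icc.mp hi; omega
    have h0 := (hasDerivAt_const x (1:ℝ)).div (hODE' i hi x hx) (hyne i hi x hx)
    convert h0 using 1
    · rfl
    · rfl
    · rfl
    have hc1 : c i x = (1 / y i x)^2 * A i x := by
      simp only [hc_def]; rw [if_neg hiN]
    rw [hc1]
    have h2 := hyne i hi x hx
    generalize A i x = a
    generalize hY : y i x = Y at h2 ⊢
    field_simp
    ring_nf
  -- derivative of g i
  have hgd : ∀ i ∈ Finset.Icc 1 (N-1), ∀ x : ℝ, 0 ≤ x →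
      HasDerivAt (g i) (G i x) x := by
    intro i hi x hx
    have hi' := Finset.mem_Icc.mp hi
    by_cases hiN : i + 1 = N
    · have hg_eq : g i = fun z => (0:ℝ) - 1 / y i z := by
        funext z; simp only [hg_def]; rw [if_pos hiN]
      rw [hg_eq]
      have h1 := (hasDerivAt_const x (0:ℝ)).sub (hρd i hi x hx)
      convert h1 using 1
      · rfl
      · rfl
      · rfl
      have hcN : c (i+1) x = 0 := by simp only [hc_def]; rw [if_pos hiN]
      simp only [hG_def]
      rw [hcN]
      ring
    · have hi1 : i + 1 ∈ Finset.Icc 1 (N-1) := by rw [Finset.mem_Icc]; omega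
      have hg_eq : g i = fun z => 1 / y (i+1) z - 1 / y i z := by
        funext z; simp only [hg_def]; rw [if_neg hiN]
      rw [hg_eq]
      have h1 := (hρd (i+1) hi1 x hx).sub (hρd i hi x hx)
      convert h1 using 1
      · rfl
      · rfl
      · rfl
      simp only [hG_def]
      ring
  -- sign fact : σ i x * A i x = -|A i x|
  have hsk : ∀ i ∈ Finset.Icc 1 (N-1), ∀ x : ℝ, 0 ≤ x →
      σ i x * A i x = -|A i x| := by
    intro i hi x hx
    have hi' := Finset.mem_Icc.mp hi
    have hy1 : 1 ≤ y i x := hy_ge1 i hi x hx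
    have hyp : 0 < y i x := hypos i hi x hx
    have hiyd : 0 < 1 / y i x := by positivity
    by_cases hg0 : g i x = 0
    · -- then necessarily i+1 ≠ N and y (i+1) x = y i x, so A i x = 0
      have hiN : i + 1 ≠ N := by
        intro h
        have hg0' := hg0
        simp only [hg_def] at hg0'
        rw [if_pos h] at hg0'
        linarith
      have hi1 : i + 1 ∈ Finset.Icc 1 (N-1) := by rw [Finset.mem_Icc]; omega
      have hy1' : 1 ≤ y (i+1) x := hy_ge1 (i+1) hi1 x hx
      have hyp' : 0 < y (i+1) x := hypos (i+1) hi1 x hx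
      have hyeq : y (i+1) x = y i x := by
        have hg0' := hg0
        simp only [hg_def] at hg0'
        rw [if_neg hiN] at hg0'
        have h2 : 1 / y (i+1) x = 1 / y i x := by linarith
        have h3 := (div_eq_div_iff hyp'.ne' hyp.ne').mp h2
        linarith
      have hA0 : A i x = 0 := by
        simp only [hA_def]; rw [if_neg hiN, hyeq, sub_self]
      rw [hA0]; simp
    · have hσv : σ i x = if 0 ≤ g i x then 1 else -1 := by
        simp only [hσ_def]; rw [if_neg hg0]
      by_cases hgpos : 0 ≤ g i x
      · have hgp : 0 < g i x := lt_of_le_of_ne hgpos (Ne.symm hg0)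
        have hiN : i + 1 ≠ N := by
          intro h
          have hgp' := hgp
          simp only [hg_def] at hgp'
          rw [if_pos h] at hgp'
          linarith
        have hi1 : i + 1 ∈ Finset.Icc 1 (N-1) := by rw [Finset.mem_Icc]; omega
        have hy1' : 1 ≤ y (i+1) x := hy_ge1 (i+1) hi1 x hx
        have hyp' : 0 < y (i+1) x := hypos (i+1) hi1 x hx
        have hlt : y (i+1) x < y i x := by
          have hgp' := hgp
          simp only [hg_def] at hgp'
          rw [if_neg hiN] at hgp'
          have h2 : 1 / y i x < 1 / y (i+1) x := by linarith
          have h3 := (div_lt_div_iff₀ hyp hyp').mp h2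
          linarith
        have hA : A i x ≤ 0 := by
          simp only [hA_def]; rw [if_neg hiN]
          have := hV_mono (mem_Ici.mpr hy1') (mem_Ici.mpr hy1) (le_of_lt hlt)
          linarith
        rw [hσv, if_pos hgpos, abs_of_nonpos hA]; ring
      · have hA : 0 ≤ A i x := by
          by_cases hiN : i + 1 = N
          · simp only [hA_def]; rw [if_pos hiN]
            have := (hV_range (y i x) (mem_Ici.mpr hy1)).2
            linarith
          · have hgn : g i x < 0 := lt_of_not_ge hgpos
            have hi1 : i + 1 ∈ Finset.Icc 1 (N-1) := by rw [Finset.mem_Icc]; omega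
            have hy1' : 1 ≤ y (i+1) x := hy_ge1 (i+1) hi1 x hx
            have hyp' : 0 < y (i+1) x := hypos (i+1) hi1 x hx
            have hlt : y i x < y (i+1) x := by
              have hgn' := hgn
              simp only [hg_def] at hgn'
              rw [if_neg hiN] at hgn'
              have h2 : 1 / y (i+1) x < 1 / y i x := by linarith
              have h3 := (div_lt_div_iff₀ hyp' hyp).mp h2
              linarith
            simp only [hA_def]; rw [if_neg hiN]
            have := hV_mono (mem_Ici.mpr hy1) (mem_Ici.mpr hy1') (le_of_lt hlt)
            linarith
        rw [hσv, if_neg hgpos, abs_of_nonneg hA]; ring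
  -- consequence : σ i x * c i x = -|c i x|
  have hσc : ∀ i ∈ Finset.Icc 1 (N-1), ∀ x : ℝ, 0 ≤ x →
      σ i x * c i x = -|c i x| := by
    intro i hi x hx
    have hiN : i ≠ N := by have := Finset.mem_Icc.mp hi; omega
    have hc1 : c i x = (1 / y i x)^2 * A i x := by
      simp only [hc_def]; rw [if_neg hiN]
    rw [hc1, abs_mul, abs_of_nonneg (sq_nonneg (1 / y i x))]
    calc σ i x * ((1 / y i x)^2 * A i x)
        = (1 / y i x)^2 * (σ i x * A i x) := by ring
      _ = (1 / y i x)^2 * -|A i x| := by rw [hsk i hi x hx]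
      _ = -((1 / y i x)^2 * |A i x|) := by ring
  have hσ1 : ∀ i x, |σ i x| ≤ 1 := by
    intro i x; simp only [hσ_def]; split_ifs <;> simp
  -- bound on the right derivative of each |g i|
  have hGb : ∀ i ∈ Finset.Icc 1 (N-1), ∀ x : ℝ, 0 ≤ x →
      σ i x * G i x ≤ (|c (i+1) x| - |c i x|) / ℓ := by
    intro i hi x hx
    have h1 : σ i x * G i x = (σ i x * c i x - σ i x * c (i+1) x) / ℓ := by
      simp only [hG_def]; ring
    rw [h1, hσc i hi x hx]
    have h3 : |σ i x * c (i+1) x| ≤ |c (i+1) x| := by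
      rw [abs_mul]
      have h4 := hσ1 i x
      nlinarith [abs_nonneg (c (i+1) x)]
    have h2 : -(σ i x * c (i+1) x) ≤ |c (i+1) x| :=
      le_trans (neg_le_abs _) h3
    have h5 : -|c i x| - σ i x * c (i+1) x ≤ |c (i+1) x| - |c i x| := by linarith
    exact div_le_div_of_nonneg_right h5 hℓpos.le
  -- right derivative of |g i|
  have habs : ∀ i ∈ Finset.Icc 1 (N-1), ∀ x : ℝ, 0 ≤ x →
      HasDerivWithinAt (fun z => |g i z|) (σ i x * G i x) (Ici x) x := by
    intro i hi x hx
    have hgd' := hgd i hi x hx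
    by_cases hg0 : g i x = 0
    · have hσval : σ i x * G i x = |G i x| := by
        simp only [hσ_def]; rw [if_pos hg0]; split_ifs with h
        · rw [one_mul, abs_of_nonneg h]
        · rw [abs_of_neg (lt_of_not_ge h)]; ring
      rw [hσval]
      have h1 : Tendsto (slope (g i) x) (𝓝[≠] x) (𝓝 (G i x)) :=
        hasDerivAt_iff_tendsto_slope.mp hgd'
      have h2 : Tendsto (fun z => |slope (g i) x z|) (𝓝[>] x) (𝓝 |G i x|) :=
        (h1.mono_left (nhdsWithin_mono x fun z hz => ne_of_gt hz)).abs
      rw [hasDerivWithinAt_iff_tendsto_slope, Ici_sdiff_left]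
      apply h2.congr'
      filter_upwards [self_mem_nhdsWithin] with z hz
      have hzx : x < z := hz
      simp only [slope_def_field, hg0, abs_zero, sub_zero]
      rw [abs_div, abs_of_pos (sub_pos.mpr hzx)]
    · have hσg : σ i x = if 0 ≤ g i x then 1 else -1 := by
        simp only [hσ_def]; rw [if_neg hg0]
      have hcont : ContinuousAt (g i) x := hgd'.continuousAt
      have hev : (fun z => |g i z|) =ᶠ[𝓝 x] fun z => σ i x * g i z := by
        rcases lt_or_gt_of_ne hg0 with hneg | hpos
        · have h5 : ∀ᶠ z in 𝓝 x, g i z < 0 := hcont (gt_mem_nhds hneg)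
          filter_upwards [h5] with z hz
          rw [hσg, if_neg (not_le.mpr hneg), abs_of_neg hz]; ring
        · have h5 : ∀ᶠ z in 𝓝 x, 0 < g i z := hcont (lt_mem_nhds hpos)
          filter_upwards [h5] with z hz
          rw [hσg, if_pos (le_of_lt hpos), abs_of_pos hz]; ring
      have h6 : HasDerivAt (fun z => σ i x * g i z) (σ i x * G i x) x :=
        hgd'.const_mul (σ i x)
      exact (h6.congr_of_eventuallyEq hev).hasDerivWithinAt
  -- continuity of the total variation
  have hFc : ContinuousOn (fun z => ∑ i ∈ Finset.Icc 1 (N-1), |g i z|) (Icc s t) := by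
    apply continuousOn_finset_sum
    intro i hi
    have : ContinuousOn (g i) (Icc s t) := fun z hz =>
      ((hgd i hi z (hs.trans hz.1)).continuousAt).continuousWithinAt
    exact this.abs
  -- telescoping
  have htel : ∀ h : ℕ → ℝ,
      ∑ i ∈ Finset.Icc 1 (N-1), (h (i+1) - h i) = h N - h 1 := by
    intro h
    have key : ∀ m : ℕ, ∑ i ∈ Finset.Icc 1 (m+1), (h (i+1) - h i) = h (m+2) - h 1 := by
      intro m
      induction m with
      | zero => simp
      | succ k ih =>
        rw [Finset.sum_Icc_succ_top (by omega : 1 ≤ k + 1 + 1), ih]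
        have e1 : k + 1 + 1 = k + 2 := rfl
        have e2 : k + 1 + 1 + 1 = k + 3 := rfl
        have e3 : k + 2 + 1 = k + 3 := rfl
        rw [e1, e2, e3]
        ring
    obtain ⟨m, hm⟩ := Nat.exists_eq_add_of_le hN
    have h1 : N - 1 = m + 1 := by omega
    rw [h1, key m, show m + 2 = N by omega]
  -- the derivative of the total variation, and its sign
  have main : ∀ x ∈ Ico s t,
      HasDerivWithinAt (fun z => ∑ i ∈ Finset.Icc 1 (N-1), |g i z|)
        (∑ i ∈ Finset.Icc 1 (N-1), σ i x * G i x) (Ici x) x := by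
    intro x hx
    exact HasDerivWithinAt.fun_sum fun i hi => habs i hi x (hs.trans hx.1)
  have hD0 : ∀ x ∈ Ico s t, (∑ i ∈ Finset.Icc 1 (N-1), σ i x * G i x) ≤ (0:ℝ) := by
    intro x hx
    have hx0 : 0 ≤ x := hs.trans hx.1
    have h1 : ∑ i ∈ Finset.Icc 1 (N-1), σ i x * G i x
        ≤ ∑ i ∈ Finset.Icc 1 (N-1), (|c (i+1) x| - |c i x|) / ℓ :=
      Finset.sum_le_sum fun i hi => hGb i hi x hx0
    have h2 : ∑ i ∈ Finset.Icc 1 (N-1), (|c (i+1) x| - |c i x|) / ℓ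
        = (|c N x| - |c 1 x|) / ℓ := by
      rw [← Finset.sum_div, htel (fun j => |c j x|)]
    have h3 : c N x = 0 := by simp [hc_def]
    rw [h2, h3] at h1
    have h4 : (|(0:ℝ)| - |c 1 x|) / ℓ ≤ 0 := by
      rw [abs_zero]
      apply div_nonpos_of_nonpos_of_nonneg
      · linarith [abs_nonneg (c 1 x)]
      · exact hℓpos.le
    linarith
  -- conclude via the fencing theorem
  have final := image_le_of_deriv_right_le_deriv_boundary
    (f := fun z => ∑ i ∈ Finset.Icc 1 (N-1), |g i z|)
    (f' := fun x => ∑ i ∈ Finset.Icc 1 (N-1), σ i x * G i x)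
    (B := fun _ => ∑ i ∈ Finset.Icc 1 (N-1), |g i s|)
    (B' := fun _ => 0)
    hFc main le_rfl continuousOn_const
    (fun x _ => hasDerivWithinAt_const _ _ _) hD0
  have := final (right_mem_Icc.mpr hst)
  simpa [hg_def] using this
end

section
/- For every t ≥ 0 one has ∫_ℝ ρ_ℓ(t,z) dz = (N−1)ℓ; in particular the total mass of ρ_ℓ is conserved in time and ‖ρ_ℓ(t,·)‖_{L¹(ℝ)} ≤ 1. -/
open MeasureTheory

lemma const_aux {f : ℝ → ℝ} (hf : ∀ t : ℝ, 0 ≤ t → HasDerivAt f 0 t)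
    {t : ℝ} (ht : 0 ≤ t) : f t = f 0 := by
  have hcont : ContinuousOn f (Set.Icc 0 t) := fun x hx =>
    ((hf x hx.1).continuousAt).continuousWithinAt
  exact constant_of_has_deriv_right_zero hcont
    (fun x hx => ((hf x hx.1).hasDerivWithinAt)) t ⟨ht, le_rfl⟩

/-- **Conservation of mass (beginning of the proof of Theorem 3.1).**
Context: `N ≥ 2`, `ℓ = 1/(N+1)`; `V : [1,∞) → [0,1]` is `C¹`, nondecreasing, `V 1 = 0`;
`y_1, …, y_{N-1} : [0,∞) → [1,∞)` solve `ẏ_i = (V_{i+1} - V_i)/ℓ`, `V_i = V (y_i)`,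
`V_N = 1`; `ρ_i = 1/y_i`; the positions (`z i` denotes `z_{i+1/2}`) satisfy
`ż_{i-1/2} = V_i`, `z_{i+1/2}(0) - z_{i-1/2}(0) = ℓ y_i(0)`; and
`ρ_ℓ(t,x) = ∑_{i=1}^{N-1} ρ_i(t) 1_{[z_{i-1/2}(t), z_{i+1/2}(t))}(x)`.
Statement: for every `t ≥ 0`, `∫_ℝ ρ_ℓ(t,x) dx = (N-1)ℓ`; in particular the total mass
is conserved in time and `‖ρ_ℓ(t,·)‖_{L¹(ℝ)} ≤ 1`. -/
theorem ftl_mass_conservation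
    (N : ℕ) (hN : 2 ≤ N)
    (ℓ : ℝ) (hℓ : ℓ = 1 / (N + 1))
    (V : ℝ → ℝ)
    (hV_C1 : ContDiffOn ℝ 1 V (Set.Ici 1))
    (hV_mono : MonotoneOn V (Set.Ici 1))
    (hV_range : ∀ x ∈ Set.Ici (1:ℝ), V x ∈ Set.Icc (0:ℝ) 1)
    (hV1 : V 1 = 0)
    (y : ℕ → ℝ → ℝ)
    (hy_ge1 : ∀ i ∈ Finset.Icc 1 (N-1), ∀ t : ℝ, 0 ≤ t → 1 ≤ y i t)
    (hODE : ∀ i ∈ Finset.Icc 1 (N-1), ∀ t : ℝ, 0 ≤ t →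
      HasDerivAt (y i) (((if i + 1 = N then (1:ℝ) else V (y (i+1) t)) - V (y i t)) / ℓ) t)
    (z : ℕ → ℝ → ℝ)
    (hzODE : ∀ i ∈ Finset.range N, ∀ t : ℝ, 0 ≤ t →
      HasDerivAt (z i) (if i + 1 = N then (1:ℝ) else V (y (i+1) t)) t)
    (hz_init : ∀ i ∈ Finset.Icc 1 (N-1), z i 0 - z (i-1) 0 = ℓ * y i 0)
    (ρℓ : ℝ → ℝ → ℝ)
    (hρℓ : ∀ t x : ℝ, ρℓ t x =
      ∑ i ∈ Finset.Icc 1 (N-1),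
        (1 / y i t) * Set.indicator (Set.Ico (z (i-1) t) (z i t)) (fun _ => (1:ℝ)) x) :
    ∀ t : ℝ, 0 ≤ t →
      (∫ x : ℝ, ρℓ t x) = ((N : ℝ) - 1) * ℓ ∧
      (∫ x : ℝ, |ρℓ t x|) ≤ 1 := by
  have hNpos : (0:ℝ) < (N:ℝ) + 1 := by positivity
  have hℓpos : 0 < ℓ := by rw [hℓ]; positivity
  intro t ht
  -- the key identity z i t - z (i-1) t = ℓ * y i t
  have key : ∀ i ∈ Finset.Icc 1 (N-1), z i t - z (i-1) t = ℓ * y i t := by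
    intro i hi
    obtain ⟨hi1, hi2⟩ := Finset.mem_Icc.mp hi
    have hiN : i < N := lt_of_le_of_lt hi2 (Nat.sub_lt (by omega) one_pos)
    have him : i - 1 < N := by omega
    have hieq : i - 1 + 1 = i := Nat.succ_pred_eq_of_pos hi1
    have hne : ¬ (i - 1 + 1 = N) := by omega
    have hderiv : ∀ s : ℝ, 0 ≤ s →
        HasDerivAt (fun s => z i s - z (i-1) s - ℓ * y i s) 0 s := by
      intro s hs
      have h1 := hzODE i (Finset.mem_range.mpr hiN) s hs
      have h2 := hzODE (i-1) (Finset.mem_range.mpr him) s hs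
      have h3 := (hODE i hi s hs).const_mul ℓ
      have := (h1.sub h2).sub h3
      refine this.congr_deriv ?_
      rw [if_neg hne, hieq]
      field_simp
      ring
    have := const_aux hderiv ht
    have h0 := hz_init i hi
    nlinarith [this]
  have hy1 : ∀ i ∈ Finset.Icc 1 (N-1), 1 ≤ y i t := fun i hi => hy_ge1 i hi t ht
  -- compute each term's integral
  have hterm : ∀ i ∈ Finset.Icc 1 (N-1),
      (∫ x : ℝ, (1 / y i t) * Set.indicator (Set.Ico (z (i-1) t) (z i t))
        (fun _ => (1:ℝ)) x) = ℓ := by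
    intro i hi
    have hyi : 1 ≤ y i t := hy1 i hi
    have hypos : 0 < y i t := lt_of_lt_of_le one_pos hyi
    have hlen : z i t - z (i-1) t = ℓ * y i t := key i hi
    have hle : z (i-1) t ≤ z i t := by nlinarith
    have heq : (fun x : ℝ => (1 / y i t) * Set.indicator (Set.Ico (z (i-1) t) (z i t))
        (fun _ => (1:ℝ)) x) = Set.indicator (Set.Ico (z (i-1) t) (z i t))
        (fun _ => 1 / y i t) := by
      funext x
      by_cases hx : x ∈ Set.Ico (z (i-1) t) (z i t) <;>
        simp [Set.indicator, hx]
    rw [heq, integral_indicator_const _ measurableSet_Ico]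
    rw [measureReal_def, Real.volume_Ico, smul_eq_mul, ENNReal.toReal_ofReal (by linarith)]
    rw [hlen]
    field_simp
  have hint : ∀ i ∈ Finset.Icc 1 (N-1),
      Integrable (fun x : ℝ => (1 / y i t) * Set.indicator (Set.Ico (z (i-1) t) (z i t))
        (fun _ => (1:ℝ)) x) := by
    intro i hi
    apply Integrable.const_mul
    rw [integrable_indicator_iff measurableSet_Ico]
    exact integrableOn_const measure_Ico_lt_top.ne
  have hcard : (Finset.Icc 1 (N-1)).card = N - 1 := by
    rw [Nat.card_Icc]; omega
  have hmain : (∫ x : ℝ, ρℓ t x) = ((N : ℝ) - 1) * ℓ := by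
    have : (∫ x : ℝ, ρℓ t x) = ∫ x : ℝ, ∑ i ∈ Finset.Icc 1 (N-1),
        (1 / y i t) * Set.indicator (Set.Ico (z (i-1) t) (z i t)) (fun _ => (1:ℝ)) x := by
      congr 1; funext x; exact hρℓ t x
    rw [this, integral_finset_sum _ hint, Finset.sum_congr rfl hterm,
      Finset.sum_const, hcard, nsmul_eq_mul]
    congr 1
    have : (1:ℕ) ≤ N := by omega
    push_cast [Nat.cast_sub this]
    ring
  refine ⟨hmain, ?_⟩
  have habs : ∀ x : ℝ, |ρℓ t x| = ρℓ t x := by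
    intro x
    rw [abs_of_nonneg]
    rw [hρℓ]
    apply Finset.sum_nonneg
    intro i hi
    have hyi : 1 ≤ y i t := hy1 i hi
    have : (0:ℝ) ≤ 1 / y i t := by positivity
    apply mul_nonneg this
    exact Set.indicator_nonneg (fun _ _ => zero_le_one) x
  have : (∫ x : ℝ, |ρℓ t x|) = ((N : ℝ) - 1) * ℓ := by
    rw [show (fun x : ℝ => |ρℓ t x|) = fun x => ρℓ t x from funext habs]
    exact hmain
  rw [this, hℓ, mul_one_div, div_le_one hNpos]
  linarith
end

section
/- Let ρ₀ : ℝ → [0,1] be integrable, of bounded variation, with ∫_ℝ ρ₀(z) dz = 1. Let N ≥ 2, ℓ = 1/(N+1), and let z_{−1/2} := −∞ and, inductively for i = 0,…,N−1, let z_{i+1/2} be the infimum of all values z such that ∫_{z_{i−1/2}}^{z} ρ₀ = ℓ. Define ρ_i := ℓ / (z_{i+1/2} − z_{i−1/2}) for i = 1,…,N−1 and ρ_N := 0. Then Σ_{i=1}^{N−1} |ρ_{i+1} − ρ_i| ≤ |ρ₀|_{BV}, where |ρ₀|_{BV} denotes the total variation of ρ₀ on ℝ. -/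
open MeasureTheory


private lemma ftl_sum_abs_le_evar (f : ℝ → ℝ) (hf : eVariationOn f Set.univ ≠ ⊤)
    {u : ℕ → ℝ} (hu : Monotone u) (n : ℕ) :
    ∑ i ∈ Finset.range n, |f (u (i + 1)) - f (u i)| ≤ (eVariationOn f Set.univ).toReal := by
  have h := eVariationOn.sum_le (f := f) (n := n) hu (fun i => Set.mem_univ (u i))
  have h2 := ENNReal.toReal_mono hf h
  rw [ENNReal.toReal_sum (fun i _ => edist_ne_top _ _)] at h2
  simpa [edist_dist, Real.dist_eq, ENNReal.toReal_ofReal dist_nonneg] using h2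

private lemma ftl_aesm_affine {f : ℝ → ℝ} (hm : AEStronglyMeasurable f (volume : Measure ℝ))
    (c d : ℝ) : AEStronglyMeasurable (fun t => f (c * t + d)) (volume : Measure ℝ) := by
  rcases eq_or_ne c 0 with rfl | hc
  · simp only [zero_mul, zero_add]; exact aestronglyMeasurable_const
  · have h1 : Measure.QuasiMeasurePreserving (fun t : ℝ => c * t) volume volume :=
      ⟨measurable_const_mul c, by rw [Real.map_volume_mul_left hc]; exact Measure.smul_absolutelyContinuous⟩
    have h2 : Measure.QuasiMeasurePreserving (fun t : ℝ => t + d) volume volume :=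
      (measurePreserving_add_right volume d).quasiMeasurePreserving
    exact hm.comp_quasiMeasurePreserving (h2.comp h1)

private lemma ftl_ii_affine {f : ℝ → ℝ} (hm : AEStronglyMeasurable f (volume : Measure ℝ))
    (hb : ∀ x, f x ∈ Set.Icc (0:ℝ) 1) (c d : ℝ) :
    IntervalIntegrable (fun t => f (c * t + d)) volume 0 1 := by
  rw [intervalIntegrable_iff]
  refine Integrable.mono' (g := fun _ => (1:ℝ)) ((integrableOn_const_iff (by simp)).2 (Or.inr ?_))
    ((ftl_aesm_affine hm c d).restrict) (ae_of_all _ fun t => ?_)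
  · rw [Set.uIoc_of_le (by norm_num : (0:ℝ) ≤ 1), Real.volume_Ioc]
    exact ENNReal.ofReal_lt_top
  · show ‖f (c * t + d)‖ ≤ 1
    rw [Real.norm_eq_abs, abs_le]
    exact ⟨by linarith [(hb (c*t+d)).1], (hb _).2⟩

private lemma ftl_exists_small {f : ℝ → ℝ} (hint : Integrable f) (h0 : ∀ x, 0 ≤ f x)
    (M : ℝ) {ε : ℝ} (hε : 0 < ε) : ∃ x, M < x ∧ f x < ε := by
  by_contra h
  push_neg at h
  have hconst : IntegrableOn (fun _ => ε) (Set.Ioi M) volume := by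
    refine Integrable.mono' hint.integrableOn aestronglyMeasurable_const ?_
    rw [ae_restrict_iff' measurableSet_Ioi]
    exact ae_of_all _ fun x hx => by
      rw [Real.norm_eq_abs, abs_of_pos hε]; exact h x hx
  rcases (integrableOn_const_iff (by simp)).1 hconst with h1 | h1
  · exact absurd h1 (by simp [hε.ne'])
  · rw [Real.volume_Ioi] at h1; exact absurd h1 (lt_irrefl _)


set_option maxHeartbeats 2000000 in
/-- **Initial discrete total variation bound (following Lemma 2.2).**
Let `ρ₀ : ℝ → [0,1]` be integrable and of bounded variation with `∫ ρ₀ = 1`.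
Let `N ≥ 2`, `ℓ = 1/(N+1)`, and construct the equi-mass partition points
(`z i` denotes `z_{i+1/2}`, `0 ≤ i ≤ N-1`, and `z_{-1/2} = -∞`): `z 0` is the
infimum of all `w` with `∫_{-∞}^w ρ₀ = ℓ`, and inductively `z i` is the infimum
of all `w` with `∫_{z (i-1)}^w ρ₀ = ℓ`.  With `ρ_i = ℓ/(z_{i+1/2} - z_{i-1/2})`
for `1 ≤ i ≤ N-1` and `ρ_N = 0`, the discrete total variation is bounded:
`∑_{i=1}^{N-1} |ρ_{i+1} - ρ_i| ≤ |ρ₀|_{BV}`. -/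
theorem ftl_initial_tv_bound
    (ρ₀ : ℝ → ℝ)
    (hρ₀_range : ∀ x : ℝ, ρ₀ x ∈ Set.Icc (0:ℝ) 1)
    (hρ₀_int : Integrable ρ₀)
    (hρ₀_mass : ∫ x : ℝ, ρ₀ x = 1)
    (hρ₀_bv : eVariationOn ρ₀ Set.univ ≠ ⊤)
    (N : ℕ) (hN : 2 ≤ N)
    (ℓ : ℝ) (hℓ : ℓ = 1 / (N + 1))
    (z : ℕ → ℝ)
    (hz0 : IsGLB {w : ℝ | ∫ x in Set.Iic w, ρ₀ x = ℓ} (z 0))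
    (hz : ∀ i ∈ Finset.Icc 1 (N-1),
      IsGLB {w : ℝ | ∫ x in Set.Ioc (z (i-1)) w, ρ₀ x = ℓ} (z i)) :
    ∑ i ∈ Finset.Icc 1 (N-1),
        |(if i + 1 = N then (0:ℝ) else ℓ / (z (i+1) - z i)) - ℓ / (z i - z (i-1))|
      ≤ (eVariationOn ρ₀ Set.univ).toReal := by
  have hℓpos : 0 < ℓ := by rw [hℓ]; positivity
  have hρnn : ∀ x, 0 ≤ ρ₀ x := fun x => (hρ₀_range x).1
  -- Each partition interval has mass ℓ and positive length.
  have key : ∀ i ∈ Finset.Icc 1 (N-1),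
      z (i-1) < z i ∧ ∫ x in Set.Ioc (z (i-1)) (z i), ρ₀ x = ℓ := by
    intro i hi
    have h := hz i hi
    set a := z (i-1) with ha
    have hne : {w : ℝ | ∫ x in Set.Ioc a w, ρ₀ x = ℓ}.Nonempty := by
      by_contra hSe
      rw [Set.not_nonempty_iff_eq_empty] at hSe
      have h1 : z i + 1 ∈ lowerBounds {w : ℝ | ∫ x in Set.Ioc a w, ρ₀ x = ℓ} := by
        rw [hSe]; intro y hy; exact absurd hy (Set.notMem_empty y)
      have := h.2 h1
      linarith
    have hSsub : {w : ℝ | ∫ x in Set.Ioc a w, ρ₀ x = ℓ} ⊆ {w | ∫ x in a..w, ρ₀ x = ℓ} := by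
      intro w hw
      have hwa : a < w := by
        by_contra hle
        push_neg at hle
        have he : Set.Ioc a w = ∅ := Set.Ioc_eq_empty (not_lt.2 hle)
        rw [Set.mem_setOf_eq, he] at hw
        simp only [Measure.restrict_empty, integral_zero_measure] at hw
        linarith
      rw [Set.mem_setOf_eq, intervalIntegral.integral_of_le hwa.le]
      exact hw
    have hclosed : IsClosed {w : ℝ | ∫ x in a..w, ρ₀ x = ℓ} :=
      isClosed_eq (hρ₀_int.continuous_primitive a) continuous_const
    have hmem : ∫ x in a..(z i), ρ₀ x = ℓ :=
      closure_minimal hSsub hclosed (h.mem_closure hne)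
    have hlt : a < z i := by
      by_contra hle
      push_neg at hle
      rw [intervalIntegral.integral_of_ge hle] at hmem
      have h0 : 0 ≤ ∫ x in Set.Ioc (z i) a, ρ₀ x :=
        setIntegral_nonneg measurableSet_Ioc (fun x _ => hρnn x)
      linarith
    exact ⟨hlt, by rw [← intervalIntegral.integral_of_le hlt.le]; exact hmem⟩
  have hstep : ∀ i, 1 ≤ i → i ≤ N - 1 → z (i-1) < z i := fun i h1 h2 =>
    (key i (Finset.mem_Icc.2 ⟨h1, h2⟩)).1
  have hmono : ∀ j k, j ≤ k → k ≤ N - 1 → z j ≤ z k := by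
    intro j k hjk
    induction k with
    | zero =>
      intro _
      have : j = 0 := Nat.le_zero.1 hjk
      rw [this]
    | succ n ih =>
      intro hk
      rcases Nat.eq_or_lt_of_le hjk with rfl | hlt
      · exact le_refl _
      · have h1 : z n ≤ z (n+1) := by
          have := hstep (n+1) (by omega) hk
          simpa using this.le
        exact le_trans (ih (by omega) (by omega)) h1
  -- ε-argument
  refine le_of_forall_pos_le_add fun ε hε => ?_
  obtain ⟨xs, hxs_gt, hxs_small⟩ := ftl_exists_small hρ₀_int hρnn (z (N-1)) hε
  set V := (eVariationOn ρ₀ Set.univ).toReal with hV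
  -- interpolating points
  set W : ℕ → ℝ → ℝ := fun i t => if i < N then (z i - z (i-1)) * t + z (i-1) else xs with hW
  have hWint : ∀ i, IntervalIntegrable (fun t => ρ₀ (W i t)) volume 0 1 := by
    intro i
    by_cases hi : i < N
    · simpa only [hW, if_pos hi] using ftl_ii_affine hρ₀_int.1 hρ₀_range (z i - z (i-1)) (z (i-1))
    · simpa only [hW, if_neg hi] using intervalIntegrable_const (c := ρ₀ xs)
  set G : ℕ → ℝ := fun i => ∫ t in (0:ℝ)..1, ρ₀ (W i t) with hG
  have hGN : G N = ρ₀ xs := by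
    simp [hG, hW]
  have hGi : ∀ i ∈ Finset.Icc 1 (N-1), G i = ℓ / (z i - z (i-1)) := by
    intro i hi
    obtain ⟨hlt, hmass⟩ := key i hi
    have hiN : i < N := by
      rw [Finset.mem_Icc] at hi; omega
    have hc : z i - z (i-1) ≠ 0 := sub_ne_zero.2 (ne_of_gt hlt)
    have hGe : G i = ∫ t in (0:ℝ)..1, ρ₀ ((z i - z (i-1)) * t + z (i-1)) := by
      simp only [hG, hW, if_pos hiN]
    rw [hGe, intervalIntegral.integral_comp_mul_add ρ₀ hc (z (i-1))]
    rw [mul_zero, zero_add, mul_one, sub_add_cancel]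
    rw [intervalIntegral.integral_of_le hlt.le, hmass, smul_eq_mul]
    field_simp
  -- monotone chain for each t ∈ [0,1]
  have hmonoW : ∀ t ∈ Set.Icc (0:ℝ) 1, Monotone (fun j => W (j+1) t) := by
    intro t ht
    apply monotone_nat_of_le_succ
    intro j
    by_cases h1 : j + 1 < N
    · have hj1 : j + 1 ≤ N - 1 := by omega
      have hz1 : z j < z (j+1) := by
        have := hstep (j+1) (by omega) hj1
        simpa using this
      have hub : W (j+1) t ≤ z (j+1) := by
        simp only [hW, if_pos h1, Nat.add_sub_cancel]
        nlinarith [ht.1, ht.2]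
      by_cases h2 : j + 1 + 1 < N
      · have hlb : z (j+1) ≤ W (j+1+1) t := by
          simp only [hW, if_pos h2, Nat.add_sub_cancel]
          have hz2 : z (j+1) < z (j+1+1) := by
            have := hstep (j+1+1) (by omega) (by omega)
            simpa using this
          nlinarith [ht.1]
        exact le_trans hub hlb
      · have : W (j+1+1) t = xs := by simp only [hW, if_neg h2]
        rw [this]
        calc W (j+1) t ≤ z (j+1) := hub
          _ ≤ z (N-1) := hmono (j+1) (N-1) (by omega) (le_refl _)
          _ ≤ xs := hxs_gt.le
    · have e1 : W (j+1) t = xs := by simp only [hW, if_neg h1]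
      have e2 : W (j+1+1) t = xs := by simp only [hW, if_neg (by omega : ¬ (j+1+1 < N))]
      rw [e1, e2]
  -- pointwise variation bound
  have hpt : ∀ t ∈ Set.Icc (0:ℝ) 1,
      ∑ i ∈ Finset.Icc 1 (N-1), |ρ₀ (W (i+1) t) - ρ₀ (W i t)| ≤ V := by
    intro t ht
    have hre : ∑ i ∈ Finset.Icc 1 (N-1), |ρ₀ (W (i+1) t) - ρ₀ (W i t)|
        = ∑ j ∈ Finset.range (N-1), |ρ₀ (W (j+1+1) t) - ρ₀ (W (j+1) t)| := by
      rw [show Finset.Icc 1 (N-1) = Finset.Ico 1 N by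
        rw [← Finset.Ico_add_one_right_eq_Icc]; congr 1; omega]
      rw [Finset.sum_Ico_eq_sum_range]
      apply Finset.sum_congr (by congr 1) (fun j _ => by rw [add_comm 1 j])
    rw [hre]
    exact ftl_sum_abs_le_evar ρ₀ hρ₀_bv (hmonoW t ht) (N-1)
  -- main integral estimate
  have hsum_int : ∑ i ∈ Finset.Icc 1 (N-1), |G (i+1) - G i| ≤ V := by
    have h1 : ∀ i ∈ Finset.Icc 1 (N-1), |G (i+1) - G i|
        ≤ ∫ t in (0:ℝ)..1, |ρ₀ (W (i+1) t) - ρ₀ (W i t)| := by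
      intro i _
      have hGd : G (i+1) - G i = ∫ t in (0:ℝ)..1, (ρ₀ (W (i+1) t) - ρ₀ (W i t)) :=
        (intervalIntegral.integral_sub (hWint (i+1)) (hWint i)).symm
      rw [hGd]
      exact intervalIntegral.abs_integral_le_integral_abs (by norm_num)
    calc ∑ i ∈ Finset.Icc 1 (N-1), |G (i+1) - G i|
        ≤ ∑ i ∈ Finset.Icc 1 (N-1), ∫ t in (0:ℝ)..1, |ρ₀ (W (i+1) t) - ρ₀ (W i t)| :=
          Finset.sum_le_sum h1
      _ = ∫ t in (0:ℝ)..1, ∑ i ∈ Finset.Icc 1 (N-1), |ρ₀ (W (i+1) t) - ρ₀ (W i t)| := by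
          rw [intervalIntegral.integral_finset_sum]
          intro i _
          exact ((hWint (i+1)).sub (hWint i)).abs
      _ ≤ ∫ _t in (0:ℝ)..1, V := by
          have h0 : IntervalIntegrable
              (∑ i ∈ Finset.Icc 1 (N-1), fun t => |ρ₀ (W (i+1) t) - ρ₀ (W i t)|) volume 0 1 :=
            IntervalIntegrable.sum _ (fun i _ => ((hWint (i+1)).sub (hWint i)).abs)
          rw [Finset.sum_fn] at h0
          exact intervalIntegral.integral_mono_on (by norm_num) h0 intervalIntegrable_const hpt
      _ = V := by rw [intervalIntegral.integral_const]; norm_num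
  -- per-term comparison
  have hterm : ∀ i ∈ Finset.Icc 1 (N-1),
      |(if i + 1 = N then (0:ℝ) else ℓ / (z (i+1) - z i)) - ℓ / (z i - z (i-1))|
        ≤ |G (i+1) - G i| + (if i + 1 = N then ε else 0) := by
    intro i hi
    have hGi' : G i = ℓ / (z i - z (i-1)) := hGi i hi
    by_cases hiN : i + 1 = N
    · rw [if_pos hiN, if_pos hiN, hGi', hiN, hGN]
      have h1 : |ρ₀ xs| ≤ ε := by rw [abs_of_nonneg (hρnn xs)]; exact hxs_small.le
      have h2 : |(0:ℝ) - ℓ / (z i - z (i-1))|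
          ≤ |ρ₀ xs - ℓ / (z i - z (i-1))| + |ρ₀ xs| := by
        rw [zero_sub, abs_neg]
        calc |ℓ / (z i - z (i-1))| = |(ℓ / (z i - z (i-1)) - ρ₀ xs) + ρ₀ xs| := by ring_nf
          _ ≤ |ℓ / (z i - z (i-1)) - ρ₀ xs| + |ρ₀ xs| := abs_add_le _ _
          _ = |ρ₀ xs - ℓ / (z i - z (i-1))| + |ρ₀ xs| := by rw [abs_sub_comm]
      linarith
    · rw [if_neg hiN, if_neg hiN, hGi']
      have hmem1 : i + 1 ∈ Finset.Icc 1 (N-1) := by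
        rw [Finset.mem_Icc] at hi ⊢; omega
      have : G (i+1) = ℓ / (z (i+1) - z i) := by
        simpa using hGi (i+1) hmem1
      rw [this]
      simp
  -- assemble
  calc ∑ i ∈ Finset.Icc 1 (N-1),
        |(if i + 1 = N then (0:ℝ) else ℓ / (z (i+1) - z i)) - ℓ / (z i - z (i-1))|
      ≤ ∑ i ∈ Finset.Icc 1 (N-1), (|G (i+1) - G i| + (if i + 1 = N then ε else 0)) :=
        Finset.sum_le_sum hterm
    _ = (∑ i ∈ Finset.Icc 1 (N-1), |G (i+1) - G i|)
        + ∑ i ∈ Finset.Icc 1 (N-1), (if i + 1 = N then ε else 0) := Finset.sum_add_distrib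
    _ ≤ V + ε := by
        have h2 : (∑ i ∈ Finset.Icc 1 (N-1), if i + 1 = N then ε else 0) = ε := by
          rw [Finset.sum_congr rfl
            (fun i _ => if_congr (by omega : (i + 1 = N) ↔ (i = N - 1)) rfl rfl)]
          rw [Finset.sum_ite_eq' (Finset.Icc 1 (N-1)) (N-1) (fun _ => ε)]
          rw [if_pos (Finset.mem_Icc.2 ⟨by omega, le_refl _⟩)]
        rw [h2]
        exact add_le_add_left hsum_int ε
end
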